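/- For any π₁, ..., π_k ∈ S_n there exists a subset S ⊆ [n] such that Σ_{i=1}^k |π_i(S) ∩ S̄| ≥ (1/4) Σ_{i=1}^k |π_i|, where S̄ = [n]∖S and |π| = n − c(π) is the minimal transposition length of π. -/

import Mathlib

/-- The minimal number of transpositions whose product is `π`. -/
noncomputable def transLength {n : ℕ} (π : Equiv.Perm (Fin n)) : ℕ :=
  sInf {k | ∃ l : List (Equiv.Perm (Fin n)),
    l.length = k ∧ (∀ τ ∈ l, τ.IsSwap) ∧ l.prod = π}

open Equiv Finset

private lemma exists_swap_list {n : ℕ} :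
    ∀ (m : ℕ) (π : Equiv.Perm (Fin n)), π.support.card ≤ m →
      ∃ l : List (Equiv.Perm (Fin n)),
        l.length ≤ m ∧ (∀ τ ∈ l, τ.IsSwap) ∧ l.prod = π := by
  intro m
  induction m with
  | zero =>
    intro π hπ
    have : π = 1 := by
      have := Nat.le_zero.mp hπ
      rwa [Finset.card_eq_zero, Equiv.Perm.support_eq_empty_iff] at this
    exact ⟨[], by simp, by simp, by simp [this]⟩
  | succ m ih =>
    intro π hπ
    by_cases h1 : π = 1
    · exact ⟨[], by simp, by simp, by simp [h1]⟩
    · have hs : π.support.Nonempty := by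
        rw [Finset.nonempty_iff_ne_empty]
        simpa [Equiv.Perm.support_eq_empty_iff] using h1
      obtain ⟨x, hx⟩ := hs
      have hx' : π x ≠ x := Equiv.Perm.mem_support.mp hx
      set σ := Equiv.swap x (π x) * π with hσ
      have hcard : σ.support.card < π.support.card :=
        Equiv.Perm.card_support_swap_mul hx'
      have hσm : σ.support.card ≤ m := by omega
      obtain ⟨l, hl1, hl2, hl3⟩ := ih σ hσm
      refine ⟨Equiv.swap x (π x) :: l, ?_, ?_, ?_⟩
      · simpa using Nat.succ_le_succ hl1
      · intro τ hτ
        rcases List.mem_cons.mp hτ with h | h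
        · exact h ▸ ⟨x, π x, Ne.symm hx', rfl⟩
        · exact hl2 τ h
      · simp only [List.prod_cons, hl3, hσ, ← mul_assoc, Equiv.swap_mul_self, one_mul]

private lemma transLength_le_card_support {n : ℕ} (π : Equiv.Perm (Fin n)) :
    transLength π ≤ π.support.card := by
  obtain ⟨l, hl1, hl2, hl3⟩ := exists_swap_list π.support.card π le_rfl
  calc transLength π ≤ l.length := Nat.sInf_le ⟨l, rfl, hl2, hl3⟩
    _ ≤ π.support.card := hl1

/-- The number of subsets containing `a` but not `b`. -/
private lemma count_subsets {n : ℕ} {a b : Fin n} (hab : a ≠ b) :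
    ((Finset.univ : Finset (Finset (Fin n))).filter
      (fun S => a ∈ S ∧ b ∉ S)).card = 2 ^ (n - 2) := by
  have key : ((Finset.univ : Finset (Finset (Fin n))).filter
      (fun S => a ∈ S ∧ b ∉ S)).card =
      (((Finset.univ.erase b).erase a).powerset).card := by
    apply Finset.card_bij' (fun S _ => S.erase a) (fun T _ => insert a T)
    · intro S hS
      have h : a ∈ S ∧ b ∉ S := by simpa using hS
      exact Finset.insert_erase h.1
    · intro T hT
      have h : T ⊆ (Finset.univ.erase b).erase a := by simpa using hT
      apply Finset.erase_insert
      intro ha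
      exact Finset.notMem_erase a _ (h ha)
    · intro S hS
      have h : a ∈ S ∧ b ∉ S := by simpa using hS
      rw [Finset.mem_powerset]
      intro x hx
      rcases Finset.mem_erase.mp hx with ⟨hxa, hxS⟩
      refine Finset.mem_erase.mpr ⟨hxa, Finset.mem_erase.mpr ⟨?_, Finset.mem_univ x⟩⟩
      rintro rfl; exact h.2 hxS
    · intro T hT
      have h : T ⊆ (Finset.univ.erase b).erase a := by simpa using hT
      simp only [Finset.mem_filter, Finset.mem_univ, true_and]
      refine ⟨Finset.mem_insert_self a T, ?_⟩
      intro hb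
      rcases Finset.mem_insert.mp hb with hh | hh
      · exact hab hh.symm
      · exact Finset.notMem_erase b _ (Finset.mem_of_mem_erase (h hh))
  rw [key, Finset.card_powerset]
  congr 1
  rw [Finset.card_erase_of_mem, Finset.card_erase_of_mem (Finset.mem_univ b),
    Finset.card_univ, Fintype.card_fin]
  · omega
  · exact Finset.mem_erase.mpr ⟨hab, Finset.mem_univ a⟩

private lemma image_inter_compl {n : ℕ} (π : Equiv.Perm (Fin n)) (S : Finset (Fin n)) :
    S.image ⇑π ∩ Sᶜ = Finset.univ.filter (fun y => π⁻¹ y ∈ S ∧ y ∉ S) := by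
  ext y
  simp only [Finset.mem_inter, Finset.mem_image, Finset.mem_compl, Finset.mem_filter,
    Finset.mem_univ, true_and]
  constructor
  · rintro ⟨⟨x, hx, rfl⟩, hy⟩
    exact ⟨by simpa using hx, hy⟩
  · rintro ⟨h1, h2⟩
    exact ⟨⟨π⁻¹ y, h1, by simp⟩, h2⟩

/-- The key averaging identity. -/
private lemma sum_over_subsets {n : ℕ} (π : Equiv.Perm (Fin n)) :
    ∑ S : Finset (Fin n), (S.image ⇑π ∩ Sᶜ).card = π.support.card * 2 ^ (n - 2) := by
  have step1 : ∑ S : Finset (Fin n), (S.image ⇑π ∩ Sᶜ).card =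
      ∑ S : Finset (Fin n), ∑ y : Fin n, if π⁻¹ y ∈ S ∧ y ∉ S then 1 else 0 := by
    refine Finset.sum_congr rfl fun S _ => ?_
    rw [image_inter_compl, Finset.card_filter]
  rw [step1, Finset.sum_comm]
  have step2 : ∀ y : Fin n,
      (∑ S : Finset (Fin n), if π⁻¹ y ∈ S ∧ y ∉ S then 1 else 0) =
      if π⁻¹ y ≠ y then 2 ^ (n - 2) else 0 := by
    intro y
    rw [← Finset.card_filter]
    by_cases hy : π⁻¹ y = y
    · simp only [hy, if_neg (not_not.mpr rfl)]
      rw [Finset.card_eq_zero, Finset.filter_eq_empty_iff]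
      intro S _
      tauto
    · rw [if_pos hy]
      exact count_subsets hy
  rw [Finset.sum_congr rfl fun y _ => step2 y]
  rw [Finset.sum_ite, Finset.sum_const, Finset.sum_const, smul_eq_mul, smul_eq_mul,
    mul_zero, add_zero]
  have : π.support = Finset.univ.filter (fun y => π⁻¹ y ≠ y) := by
    ext y
    simp only [Equiv.Perm.mem_support, Finset.mem_filter, Finset.mem_univ, true_and]
    constructor
    · intro h hc
      exact h (by conv_lhs => rw [← hc]; rw [← Equiv.Perm.mul_apply, mul_inv_cancel, Equiv.Perm.one_apply])
    · intro h hc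
      exact h (Equiv.Perm.inv_eq_iff_eq.mpr hc.symm)
  rw [this]

theorem exists_cut_for_many_perms (n k : ℕ) (π : Fin k → Equiv.Perm (Fin n)) :
    ∃ S : Finset (Fin n),
      (1 / 4 : ℝ) * ∑ i : Fin k, (transLength (π i) : ℝ)
        ≤ ∑ i : Fin k, ((S.image (⇑(π i)) ∩ Sᶜ).card : ℝ) := by
  by_cases hn : n ≤ 1
  · -- all permutations are the identity, transLength = 0
    have htl : ∀ i, transLength (π i) = 0 := by
      intro i
      haveI : Subsingleton (Fin n) := ⟨fun a b => by
        have := a.2; have := b.2; exact Fin.ext (by omega)⟩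
      have : π i = 1 := Equiv.ext fun x => Subsingleton.elim _ _
      refine Nat.le_zero.mp (Nat.sInf_le ⟨[], rfl, by simp, by simp [this]⟩)
    refine ⟨∅, ?_⟩
    simp only [htl, Nat.cast_zero, Finset.sum_const_zero, mul_zero]
    exact Finset.sum_nonneg fun i _ => Nat.cast_nonneg _
  · push_neg at hn
    -- average over all subsets
    have key : ∑ S : Finset (Fin n),
        ((1 / 4 : ℝ) * ∑ i : Fin k, (transLength (π i) : ℝ))
        ≤ ∑ S : Finset (Fin n), ∑ i : Fin k, ((S.image (⇑(π i)) ∩ Sᶜ).card : ℝ) := by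
      rw [Finset.sum_const, Finset.card_univ, Fintype.card_finset, Fintype.card_fin,
        Finset.sum_comm]
      have hpow : (2 : ℝ) ^ n = 2 ^ (n - 2) * 4 := by
        have : n - 2 + 2 = n := by omega
        rw [← this, pow_add]; norm_num
      calc (2 ^ n : ℕ) • ((1 / 4 : ℝ) * ∑ i : Fin k, (transLength (π i) : ℝ))
          = ∑ i : Fin k, (2 : ℝ) ^ (n - 2) * (transLength (π i) : ℝ) := by
            rw [nsmul_eq_mul, Finset.mul_sum, Finset.mul_sum]
            refine Finset.sum_congr rfl fun i _ => ?_
            push_cast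
            rw [hpow]
            ring
        _ ≤ ∑ i : Fin k, (2 : ℝ) ^ (n - 2) * ((π i).support.card : ℝ) := by
            refine Finset.sum_le_sum fun i _ => ?_
            have := transLength_le_card_support (π i)
            have h2 : (transLength (π i) : ℝ) ≤ ((π i).support.card : ℝ) :=
              Nat.cast_le.mpr this
            nlinarith [pow_pos (by norm_num : (0:ℝ) < 2) (n - 2)]
        _ = ∑ i : Fin k, ∑ S : Finset (Fin n), ((S.image (⇑(π i)) ∩ Sᶜ).card : ℝ) := by
            refine Finset.sum_congr rfl fun i _ => ?_
            have := sum_over_subsets (π i)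
            have hcast : ((∑ S : Finset (Fin n), (S.image (⇑(π i)) ∩ Sᶜ).card : ℕ) : ℝ)
                = (((π i).support.card * 2 ^ (n - 2) : ℕ) : ℝ) := by rw [this]
            push_cast at hcast
            rw [mul_comm]
            exact hcast.symm
    obtain ⟨S, _, hS⟩ := Finset.exists_le_of_sum_le
      (Finset.univ_nonempty (α := Finset (Fin n))) key
    exact ⟨S, hS⟩
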